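/- Let H0, H1, …, Hd be m×m real symmetric matrices and let P be any real symmetric dm×dm matrix. Define the (d+1)m×(d+1)m real symmetric matrix L(P) = H̃ + E1ᵀ·P·E1 − E2ᵀ·P·E2, where H̃ is the block matrix (with m×m blocks indexed by 0,…,d) whose (0,k) block and (k,0) block equal H_k for k = 0,…,d and whose remaining blocks are zero, E1 = [I_{dm} 0] selects the first dm coordinates and E2 = [0 I_{dm}] selects the last dm coordinates. Then for every z ∈ ℂ with |z| = 1, writing B(z) = [I_m; z·I_m; …; z^d·I_m] ∈ ℂ^{(d+1)m×m}, one has B(z)* · L(P) · B(z) = H0 + ∑_{k=1}^{d} H_k·(z^k + z^{−k}). Consequently, if L(P) is positive semidefinite for some symmetric P, then the Hermitian matrix H(z) = H0 + ∑_{k=1}^{d} H_k·(z^k + z^{−k}) is positive semidefinite for every z on the unit circle. -/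

import Mathlib

open Matrix ComplexOrder

lemma psd_map_aux {n : Type*} [Fintype n] [DecidableEq n] {A : Matrix n n ℝ}
    (hA : A.PosSemidef) : (A.map (algebraMap ℝ ℂ)).PosSemidef := by
  obtain ⟨C, rfl⟩ : ∃ C : Matrix n n ℝ, A = Cᴴ * C := by
    open scoped MatrixOrder in exact CStarAlgebra.nonneg_iff_eq_star_mul_self.mp hA.nonneg
  have h : (Cᴴ * C).map (algebraMap ℝ ℂ)
      = (C.map (algebraMap ℝ ℂ))ᴴ * C.map (algebraMap ℝ ℂ) := by
    rw [Matrix.map_mul (f := algebraMap ℝ ℂ)]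
    congr 1
    rw [← Matrix.conjTranspose_map]
    intro x
    simp [Complex.conj_ofReal]
  rw [h]
  exact Matrix.posSemidef_conjTranspose_mul_self _

lemma mapT_aux {p q : Type*} (M : Matrix p q ℝ) :
    (Mᵀ).map (algebraMap ℝ ℂ) = (M.map (algebraMap ℝ ℂ))ᴴ := by
  ext i j
  simp [Matrix.conjTranspose_apply, Complex.conj_ofReal]

/-- Let `H0, …, Hd` be `m × m` real symmetric matrices, `P` a real
symmetric `dm × dm` matrix, and `L(P) = H̃ + E1ᵀ P E1 − E2ᵀ P E2`, where `H̃` has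
`(0,k)` and `(k,0)` blocks equal to `H k` and zero blocks elsewhere, `E1` selects the
first `dm` coordinates and `E2` the last `dm` coordinates. Then for every `z` on the
unit circle, with `B z = [I; z I; …; z^d I]`, one has
`(B z)ᴴ L(P) (B z) = H0 + ∑_{k=1}^d (z^k + z^{−k}) H k`. Consequently, if `L(P)` is
positive semidefinite, then `H(z) = H0 + ∑_{k=1}^d (z^k + z^{−k}) H k` is positive
semidefinite for every `z` on the unit circle. -/
theorem stmt17 (d m : ℕ) (H : Fin (d + 1) → Matrix (Fin m) (Fin m) ℝ)
    (hHsymm : ∀ k, (H k).IsSymm)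
    (P : Matrix (Fin d × Fin m) (Fin d × Fin m) ℝ) (hPsymm : P.IsSymm)
    (Htilde : Matrix (Fin (d + 1) × Fin m) (Fin (d + 1) × Fin m) ℝ)
    (hHt : ∀ (k l : Fin (d + 1)) (i j : Fin m),
      Htilde (k, i) (l, j) = if k = 0 then H l i j else if l = 0 then H k i j else 0)
    (E1 E2 : Matrix (Fin d × Fin m) (Fin (d + 1) × Fin m) ℝ)
    (hE1 : ∀ (k : Fin d) (i : Fin m) (l : Fin (d + 1)) (j : Fin m),
      E1 (k, i) (l, j) = if k.castSucc = l ∧ i = j then 1 else 0)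
    (hE2 : ∀ (k : Fin d) (i : Fin m) (l : Fin (d + 1)) (j : Fin m),
      E2 (k, i) (l, j) = if k.succ = l ∧ i = j then 1 else 0)
    (L : Matrix (Fin (d + 1) × Fin m) (Fin (d + 1) × Fin m) ℝ)
    (hL : L = Htilde + E1ᵀ * P * E1 - E2ᵀ * P * E2)
    (B : ℂ → Matrix (Fin (d + 1) × Fin m) (Fin m) ℂ)
    (hB : ∀ (z : ℂ) (k : Fin (d + 1)) (i j : Fin m),
      B z (k, i) j = if i = j then z ^ (k : ℕ) else 0) :
    (∀ z : ℂ, ‖z‖ = 1 →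
      (B z)ᴴ * L.map (algebraMap ℝ ℂ) * B z =
        (H 0).map (algebraMap ℝ ℂ) +
          ∑ k ∈ Finset.Ioi (0 : Fin (d + 1)),
            (z ^ (k : ℕ) + z⁻¹ ^ (k : ℕ)) • (H k).map (algebraMap ℝ ℂ)) ∧
    (L.PosSemidef → ∀ z : ℂ, ‖z‖ = 1 →
      ((H 0).map (algebraMap ℝ ℂ) +
        ∑ k ∈ Finset.Ioi (0 : Fin (d + 1)),
          (z ^ (k : ℕ) + z⁻¹ ^ (k : ℕ)) • (H k).map (algebraMap ℝ ℂ)).PosSemidef) := by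
  set c := algebraMap ℝ ℂ with hc
  have key : ∀ z : ℂ, ‖z‖ = 1 →
      (B z)ᴴ * L.map c * B z =
        (H 0).map c + ∑ k ∈ Finset.Ioi (0 : Fin (d + 1)),
          (z ^ (k : ℕ) + z⁻¹ ^ (k : ℕ)) • (H k).map c := by
    intro z hznorm
    have hzz : z * star z = 1 := by
      rw [Complex.star_def, Complex.mul_conj]
      norm_cast
      rw [Complex.normSq_eq_norm_sq, hznorm, one_pow]
    have hz : star z = z⁻¹ := by
      rw [eq_comm]
      exact inv_eq_of_mul_eq_one_right hzz
    -- the compressed column matrix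
    set C1 : Matrix (Fin d × Fin m) (Fin m) ℂ :=
      Matrix.of (fun p j => if p.2 = j then z ^ (p.1 : ℕ) else 0) with hC1
    have hB1 : E1.map c * B z = C1 := by
      ext ⟨k, i⟩ j
      rw [Matrix.mul_apply, Fintype.sum_prod_type]
      simp [hE1, hB, Matrix.map_apply, apply_ite c, ite_and, Finset.sum_ite_eq',
        Finset.sum_ite_eq, apply_ite Complex.ofReal, ite_mul, zero_mul, one_mul, hC1, hc]
    have hB2 : E2.map c * B z = z • C1 := by
      ext ⟨k, i⟩ j
      rw [Matrix.mul_apply, Fintype.sum_prod_type]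
      simp [hE2, hB, Matrix.map_apply, apply_ite c, ite_and, Finset.sum_ite_eq',
        Finset.sum_ite_eq, apply_ite Complex.ofReal, ite_mul, zero_mul, one_mul,
        Fin.val_succ, pow_succ, mul_comm, hC1, hc]
    -- the Htilde part
    have hHtB : (B z)ᴴ * Htilde.map c * B z
        = (∑ k : Fin (d + 1), z ^ (k : ℕ) • (H k).map c)
          + (∑ k : Fin (d + 1), z⁻¹ ^ (k : ℕ) • (H k).map c)
          - (H 0).map c := by
      ext i j
      simp only [Matrix.mul_apply, Matrix.conjTranspose_apply, Fintype.sum_prod_type,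
        Matrix.map_apply, hB, hHt, apply_ite (star : ℂ → ℂ), star_zero, star_pow, hz,
        apply_ite Complex.ofReal, Complex.ofReal_zero, ite_mul, zero_mul, mul_ite, mul_zero,
        Finset.sum_ite_eq', Finset.sum_ite_eq, Finset.mem_univ, if_true,
        Matrix.sub_apply, Matrix.add_apply, Matrix.sum_apply, Matrix.smul_apply, smul_eq_mul]
      have hmerge : ∀ x1 : Fin (d+1),
          c (if x1 = 0 then H 0 i j else H x1 i j) = c (H x1 i j) := by
        intro x1; split <;> simp_all
      rw [Fin.sum_univ_succ]
      simp only [Fin.succ_ne_zero, if_false, if_true, eq_self_iff_true, Fin.val_zero, pow_zero,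
        mul_one, one_mul, hmerge, apply_ite c, map_zero, mul_ite, mul_zero,
        Finset.sum_ite_eq', Finset.mem_univ, if_true]
      rw [Fin.sum_univ_succ (f := fun x : Fin (d+1) => z ^ (x : ℕ) * c (H x i j))]
      have hcc : ∑ x : Fin d, c (H x.succ i j) * z ^ (x.succ : ℕ)
          = ∑ x : Fin d, z ^ (x.succ : ℕ) * c (H x.succ i j) :=
        Finset.sum_congr rfl (fun x _ => mul_comm _ _)
      rw [hcc]
      simp only [Fin.val_zero, pow_zero, one_mul]
      ring
    -- break up L.map
    have hmap : L.map c = Htilde.map c + (E1.map c)ᴴ * P.map c * E1.map c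
        - (E2.map c)ᴴ * P.map c * E2.map c := by
      rw [hL, ← mapT_aux, ← mapT_aux, ← Matrix.map_mul, ← Matrix.map_mul,
        ← Matrix.map_mul, ← Matrix.map_mul]
      ext i j
      simp [Matrix.sub_apply, Matrix.add_apply, map_sub, map_add, hc]
    have expand : (B z)ᴴ * L.map c * B z
        = (B z)ᴴ * Htilde.map c * B z
          + ((E1.map c * B z)ᴴ * P.map c * (E1.map c * B z))
          - ((E2.map c * B z)ᴴ * P.map c * (E2.map c * B z)) := by
      rw [hmap]
      simp only [Matrix.mul_sub, Matrix.mul_add, Matrix.sub_mul, Matrix.add_mul,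
        Matrix.conjTranspose_mul, Matrix.mul_assoc]
    have hcancel : ((E2.map c * B z)ᴴ * P.map c * (E2.map c * B z))
        = ((E1.map c * B z)ᴴ * P.map c * (E1.map c * B z)) := by
      rw [hB1, hB2, Matrix.conjTranspose_smul, Matrix.smul_mul, Matrix.smul_mul,
        Matrix.mul_smul, smul_smul, mul_comm (star z) z, hzz, one_smul]
    have hIoi : Finset.Ioi (0 : Fin (d + 1)) = Finset.univ.erase 0 := by
      ext k; simp [Fin.pos_iff_ne_zero]
    rw [expand, hcancel, hHtB, hIoi,
      Finset.sum_erase_eq_sub (Finset.mem_univ (0 : Fin (d + 1)))]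
    simp only [Fin.val_zero, pow_zero, add_smul]
    rw [Finset.sum_add_distrib]
    simp only [one_smul]
    abel
  refine ⟨key, fun hpsd z hznorm => ?_⟩
  exact key z hznorm ▸ (psd_map_aux hpsd).conjTranspose_mul_mul_same (B z)
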